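/- In ℂ_q[SU_2] with its calculus Ω¹_q(SU_2) determined by the ideal I generated by a + qd − (q+1), bc, b², c², (a−q)b, (a−q)c in ker(ε), the calculus is not isomorphic to Woronowicz's 3D calculus: the ideal I' of the 3D calculus, generated by a + q⁻²d − (1 + q⁻²), bc, b², c², (a−1)b, (a−1)c, is distinct from I, since any right ideal of ker(ε) containing both (a−q)b and (a−1)b contains b, while neither I nor I' contains b (for q ≠ 1). -/

import Mathlib

open TensorProduct

/-- Entries of the standard type-A R-matrix. -/
noncomputable def Rent (q : ℝ) {N : ℕ} (i k j l : Fin N) : ℂ :=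
  (if i = k then (q : ℂ) else 1) * (if i = l then 1 else 0) * (if k = j then 1 else 0)
    + ((q : ℂ) - (q : ℂ)⁻¹) * (if i < k then 1 else 0) *
        (if i = j then 1 else 0) * (if k = l then 1 else 0)

/-- The quantum determinant, as an element of the free algebra on the `N²` generators. -/
noncomputable def qdetF (q : ℝ) (N : ℕ) : FreeAlgebra ℂ (Fin N × Fin N) :=
  ∑ π : Equiv.Perm (Fin N),
    ((-(q : ℂ)) ^
        ((Finset.univ.filter fun p : Fin N × Fin N => p.1 < p.2 ∧ π p.2 < π p.1).card)) •
      (List.ofFn fun i : Fin N => FreeAlgebra.ι ℂ (i, π i)).prod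

/-- The defining relations of `ℂ_q[SU_N]`: the FRT relations together with `det_N = 1`. -/
inductive suRel (q : ℝ) (N : ℕ) :
    FreeAlgebra ℂ (Fin N × Fin N) → FreeAlgebra ℂ (Fin N × Fin N) → Prop
  | frt (a b c d : Fin N) : suRel q N
      (∑ w : Fin N, ∑ x : Fin N,
        Rent q a c w x • (FreeAlgebra.ι ℂ (w, b) * FreeAlgebra.ι ℂ (x, d)))
      (∑ y : Fin N, ∑ z : Fin N,
        Rent q y z b d • (FreeAlgebra.ι ℂ (a, y) * FreeAlgebra.ι ℂ (c, z)))
  | det : suRel q N (qdetF q N) 1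

/-- The quantized coordinate ring `ℂ_q[SU_N]`. -/
abbrev SUq (q : ℝ) (N : ℕ) := RingQuot (suRel q N)

/-- The generators `u^i_j` of `ℂ_q[SU_N]`. -/
noncomputable def ugen (q : ℝ) (N : ℕ) (i j : Fin N) : SUq q N :=
  RingQuot.mkAlgHom ℂ (suRel q N) (FreeAlgebra.ι ℂ (i, j))

/-- The quantum determinant in the free algebra on generators `u^i_j` plus one extra
generator (the inverse of the determinant). -/
noncomputable def qdetF' (q : ℝ) (n : ℕ) : FreeAlgebra ℂ ((Fin n × Fin n) ⊕ Unit) :=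
  ∑ π : Equiv.Perm (Fin n),
    ((-(q : ℂ)) ^
        ((Finset.univ.filter fun p : Fin n × Fin n => p.1 < p.2 ∧ π p.2 < π p.1).card)) •
      (List.ofFn fun i : Fin n => FreeAlgebra.ι ℂ (Sum.inl (i, π i))).prod

/-- The defining relations of `ℂ_q[U_n]`: the FRT relations together with the relations
making the extra generator a two-sided inverse of `det_n`. -/
inductive uqRel (q : ℝ) (n : ℕ) :
    FreeAlgebra ℂ ((Fin n × Fin n) ⊕ Unit) → FreeAlgebra ℂ ((Fin n × Fin n) ⊕ Unit) → Prop
  | frt (a b c d : Fin n) : uqRel q n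
      (∑ w : Fin n, ∑ x : Fin n,
        Rent q a c w x • (FreeAlgebra.ι ℂ (Sum.inl (w, b)) * FreeAlgebra.ι ℂ (Sum.inl (x, d))))
      (∑ y : Fin n, ∑ z : Fin n,
        Rent q y z b d • (FreeAlgebra.ι ℂ (Sum.inl (a, y)) * FreeAlgebra.ι ℂ (Sum.inl (c, z))))
  | detinv_left : uqRel q n (FreeAlgebra.ι ℂ (Sum.inr ()) * qdetF' q n) 1
  | detinv_right : uqRel q n (qdetF' q n * FreeAlgebra.ι ℂ (Sum.inr ())) 1

/-- The quantized coordinate ring `ℂ_q[U_n]`. -/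
abbrev Uq (q : ℝ) (n : ℕ) := RingQuot (uqRel q n)

/-- The generators `u^i_j` of `ℂ_q[U_n]`. -/
noncomputable def upgen (q : ℝ) (n : ℕ) (i j : Fin n) : Uq q n :=
  RingQuot.mkAlgHom ℂ (uqRel q n) (FreeAlgebra.ι ℂ (Sum.inl (i, j)))

/-- The inverse `det_n⁻¹` of the quantum determinant in `ℂ_q[U_n]`. -/
noncomputable def dinv (q : ℝ) (n : ℕ) : Uq q n :=
  RingQuot.mkAlgHom ℂ (uqRel q n) (FreeAlgebra.ι ℂ (Sum.inr ()))

/-- The right ideal of an algebra generated by a set. -/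
noncomputable def rIdeal {A : Type*} [Ring A] [Algebra ℂ A] (s : Set A) : Submodule ℂ A :=
  Submodule.span ℂ {x : A | ∃ g ∈ s, ∃ f : A, x = g * f}

section Generic
variable {R : Type*} [Ring R] [Algebra ℂ R]

noncomputable def Umat (A B C D : R) : Fin 2 × Fin 2 → R :=
  fun p => ![![A, B], ![C, D]] p.1 p.2

theorem su2_rel_lift (q : ℝ) (hq : (q:ℂ) ≠ 0) (A B C D : R)
    (hAB : A*B = (q:ℂ) • (B*A)) (hAC : A*C = (q:ℂ) • (C*A)) (hCB : C*B = B*C)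
    (hBD : B*D = (q:ℂ) • (D*B)) (hCD : C*D = (q:ℂ) • (D*C))
    (hDA : D*A = A*D - ((q:ℂ)-(q:ℂ)⁻¹) • (B*C)) (hdet : A*D - (q:ℂ) • (B*C) = 1) :
    ∀ x y, suRel q 2 x y →
      FreeAlgebra.lift ℂ (Umat A B C D) x = FreeAlgebra.lift ℂ (Umat A B C D) y := by
  intro x y h
  induction h with
  | frt a b c d =>
    fin_cases a <;> fin_cases b <;> fin_cases c <;> fin_cases d <;>
      simp only [Rent, Fin.sum_univ_two, map_add, map_smul, map_mul,
        FreeAlgebra.lift_ι_apply, Umat, Matrix.cons_val_zero, Matrix.cons_val_one,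
        Matrix.head_cons] <;>
      norm_num <;>
      simp only [hAB, hAC, hCB, hBD, hCD, hDA] <;>
      match_scalars <;>
      field_simp <;>
      (try simp only [Complex.coe_algebraMap]) <;> (try ring)
  | det =>
    have huniv : (Finset.univ : Finset (Equiv.Perm (Fin 2)))
        = {1, Equiv.swap 0 1} := by decide
    have hc1 : (Finset.univ.filter fun p : Fin 2 × Fin 2 =>
        p.1 < p.2 ∧ (1 : Equiv.Perm (Fin 2)) p.2 < (1 : Equiv.Perm (Fin 2)) p.1).card = 0 := by
      decide
    have hc2 : (Finset.univ.filter fun p : Fin 2 × Fin 2 =>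
        p.1 < p.2 ∧ (Equiv.swap 0 1 : Equiv.Perm (Fin 2)) p.2
          < (Equiv.swap 0 1 : Equiv.Perm (Fin 2)) p.1).card = 1 := by
      decide
    rw [qdetF, huniv, Finset.sum_insert (by decide), Finset.sum_singleton, hc1, hc2]
    simp only [pow_zero, pow_one, one_smul, List.ofFn_succ, List.ofFn_zero,
      List.prod_cons, List.prod_nil, mul_one, map_add, map_smul, map_mul, map_one,
      FreeAlgebra.lift_ι_apply, Umat]
    norm_num [Equiv.swap_apply_left, Equiv.swap_apply_right]
    rw [← sub_eq_add_neg, ← algebraMap_smul ℂ q (B*C), Complex.coe_algebraMap]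
    exact hdet
end Generic

theorem su2hom_exists {R : Type*} [Ring R] [Algebra ℂ R] (q : ℝ) (hq : (q:ℂ) ≠ 0)
    (A B C D : R)
    (hAB : A*B = (q:ℂ) • (B*A)) (hAC : A*C = (q:ℂ) • (C*A)) (hCB : C*B = B*C)
    (hBD : B*D = (q:ℂ) • (D*B)) (hCD : C*D = (q:ℂ) • (D*C))
    (hDA : D*A = A*D - ((q:ℂ)-(q:ℂ)⁻¹) • (B*C)) (hdet : A*D - (q:ℂ) • (B*C) = 1) :
    ∃ φ : SUq q 2 →ₐ[ℂ] R, φ (ugen q 2 0 0) = A ∧ φ (ugen q 2 0 1) = B ∧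
      φ (ugen q 2 1 0) = C ∧ φ (ugen q 2 1 1) = D := by
  refine ⟨RingQuot.liftAlgHom ℂ ⟨FreeAlgebra.lift ℂ (Umat A B C D),
    su2_rel_lift q hq A B C D hAB hAC hCB hBD hCD hDA hdet⟩, ?_, ?_, ?_, ?_⟩ <;>
  · rw [ugen, RingQuot.liftAlgHom_mkAlgHom_apply]
    simp [Umat]

noncomputable def entryLM (n : ℕ) (i j : Fin n) : Matrix (Fin n) (Fin n) ℂ →ₗ[ℂ] ℂ where
  toFun m := m i j
  map_add' _ _ := rfl
  map_smul' _ _ := rfl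

example (q : ℝ) (hq : (q:ℂ) ≠ 0) : True := by
  obtain ⟨φ, ha, hb, hc, hd⟩ := su2hom_exists q hq
    (!![(q:ℂ),0;0,1]) (!![0,1;0,0]) (0 : Matrix (Fin 2) (Fin 2) ℂ) (!![(q:ℂ)⁻¹,0;0,1])
    (by ext i j; fin_cases i <;> fin_cases j <;>
      simp [Matrix.mul_apply, Fin.sum_univ_two] <;> field_simp)
    (by simp) (by simp)
    (by ext i j; fin_cases i <;> fin_cases j <;>
      simp [Matrix.mul_apply, Fin.sum_univ_two] <;> field_simp)
    (by simp)
    (by ext i j; fin_cases i <;> fin_cases j <;>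
      simp [Matrix.mul_apply, Fin.sum_univ_two, Matrix.one_apply] <;> field_simp)
    (by ext i j; fin_cases i <;> fin_cases j <;>
      simp [Matrix.mul_apply, Fin.sum_univ_two, Matrix.one_apply] <;> field_simp)
  trivial

theorem not_mem_rIdeal {A : Type*} [Ring A] [Algebra ℂ A] (s : Set A) (b : A)
    (ψ : A →ₗ[ℂ] ℂ) (h0 : ∀ g ∈ s, ∀ f, ψ (g * f) = 0) (hb : ψ b ≠ 0) :
    b ∉ rIdeal s := by
  intro hmem
  have hle : rIdeal s ≤ LinearMap.ker ψ := by
    rw [rIdeal, Submodule.span_le]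
    rintro x ⟨g, hg, f, rfl⟩
    exact h0 g hg f
  exact hb (hle hmem)

set_option maxHeartbeats 2000000 in

/-- The calculus `Ω¹_q(SU_2)` is not isomorphic to Woronowicz's 3D calculus: the right
ideal `I` of `ker ε` generated by `a + qd − (q+1), bc, b², c², (a−q)b, (a−q)c` is
distinct from the right ideal `I'` generated by
`a + q⁻²d − (1+q⁻²), bc, b², c², (a−1)b, (a−1)c`; indeed any right ideal containing
both `(a−q)b` and `(a−1)b` contains `b`, while neither `I` nor `I'` contains `b`
(for `q ≠ 1`). -/
theorem su2_calculus_not_3D (q : ℝ) (hq0 : 0 < q) (hq1 : q < 1) :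
    let a := ugen q 2 0 0
    let b := ugen q 2 0 1
    let c := ugen q 2 1 0
    let d := ugen q 2 1 1
    let I := rIdeal {a + (q : ℂ) • d - ((q : ℂ) + 1) • (1 : SUq q 2), b * c, b * b, c * c,
      (a - (q : ℂ) • (1 : SUq q 2)) * b, (a - (q : ℂ) • (1 : SUq q 2)) * c}
    let I' := rIdeal {a + ((q : ℂ)⁻¹)^2 • d - (1 + ((q : ℂ)⁻¹)^2) • (1 : SUq q 2), b * c,
      b * b, c * c, (a - 1) * b, (a - 1) * c}
    b ∉ I ∧ b ∉ I' ∧ I ≠ I' := by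
  intro a b c d I I'
  have hq : (q:ℂ) ≠ 0 := by exact_mod_cast hq0.ne'
  have hqe : (q:ℂ) ≠ 1 := by exact_mod_cast hq1.ne
  have hq1c : (1:ℂ) - (q:ℂ) ≠ 0 := sub_ne_zero.mpr (Ne.symm hqe)
  -- the 2×2 representation killing the generators of I
  obtain ⟨φ, ha2, hb2, hc2, hd2⟩ := su2hom_exists q hq
    (!![(q:ℂ),0;0,1]) (!![0,1;0,0]) (0 : Matrix (Fin 2) (Fin 2) ℂ) (!![(q:ℂ)⁻¹,0;0,1])
    (by ext i j; fin_cases i <;> fin_cases j <;>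
      simp [Matrix.mul_apply, Fin.sum_univ_two] <;> field_simp)
    (by simp) (by simp)
    (by ext i j; fin_cases i <;> fin_cases j <;>
      simp [Matrix.mul_apply, Fin.sum_univ_two] <;> field_simp)
    (by simp)
    (by ext i j; fin_cases i <;> fin_cases j <;>
      simp [Matrix.mul_apply, Fin.sum_univ_two, Matrix.one_apply] <;> field_simp)
    (by ext i j; fin_cases i <;> fin_cases j <;>
      simp [Matrix.mul_apply, Fin.sum_univ_two, Matrix.one_apply] <;> field_simp)
  -- the 4×4 representation detecting b modulo I'
  obtain ⟨φ', ha4, hb4, hc4, hd4⟩ := su2hom_exists q hq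
    (!![1,1,0,0; 0,((q:ℂ)⁻¹)^2,0,0; 0,0,(q:ℂ)⁻¹,0; 0,0,0,(q:ℂ)⁻¹])
    (!![0,0,1,0; 0,0,0,0; 0,0,0,0; 0,0,0,0])
    (!![0,0,0,1; 0,0,0,0; 0,0,0,0; 0,0,0,0])
    (!![1,-(q:ℂ)^2,0,0; 0,(q:ℂ)^2,0,0; 0,0,(q:ℂ),0; 0,0,0,(q:ℂ)])
    (by ext i j; fin_cases i <;> fin_cases j <;>
      simp [Matrix.mul_apply, Fin.sum_univ_four, Matrix.vecHead, Matrix.vecTail] <;> field_simp)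
    (by ext i j; fin_cases i <;> fin_cases j <;>
      simp [Matrix.mul_apply, Fin.sum_univ_four, Matrix.vecHead, Matrix.vecTail] <;> field_simp)
    (by ext i j; fin_cases i <;> fin_cases j <;>
      simp [Matrix.mul_apply, Fin.sum_univ_four, Matrix.vecHead, Matrix.vecTail] <;> field_simp)
    (by ext i j; fin_cases i <;> fin_cases j <;>
      simp [Matrix.mul_apply, Fin.sum_univ_four, Matrix.vecHead, Matrix.vecTail] <;> field_simp)
    (by ext i j; fin_cases i <;> fin_cases j <;>
      simp [Matrix.mul_apply, Fin.sum_univ_four, Matrix.vecHead, Matrix.vecTail] <;> field_simp)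
    (by ext i j; fin_cases i <;> fin_cases j <;>
      simp [Matrix.mul_apply, Fin.sum_univ_four, Matrix.one_apply, Matrix.vecHead,
        Matrix.vecTail] <;> field_simp <;> ring)
    (by ext i j; fin_cases i <;> fin_cases j <;>
      simp [Matrix.mul_apply, Fin.sum_univ_four, Matrix.one_apply, Matrix.vecHead,
        Matrix.vecTail] <;> field_simp <;> ring)
  have hbI : b ∉ I := by
    refine not_mem_rIdeal _ _ ((entryLM 2 0 1).comp φ.toLinearMap) ?_ ?_
    · intro g hg f
      have hg0 : φ g = 0 := by
        simp only [Set.mem_insert_iff, Set.mem_singleton_iff] at hg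
        rcases hg with rfl|rfl|rfl|rfl|rfl|rfl <;>
          simp only [map_add, map_sub, map_smul, map_mul, map_one, a, b, c, d, ha2, hb2, hc2, hd2] <;>
          (ext i j; fin_cases i <;> fin_cases j <;>
            simp [Matrix.mul_apply, Fin.sum_univ_two, Matrix.one_apply] <;>
            (try field_simp) <;> (try ring))
      simp [entryLM, map_mul, hg0]
    · change ¬ (φ b) 0 1 = 0
      simp [entryLM, b, hb2]
  have hbI' : b ∉ I' := by
    refine not_mem_rIdeal _ _ ((entryLM 4 0 2).comp φ'.toLinearMap) ?_ ?_
    · intro g hg f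
      have hg0 : ∀ k, φ' g 0 k = 0 := by
        simp only [Set.mem_insert_iff, Set.mem_singleton_iff] at hg
        rcases hg with rfl|rfl|rfl|rfl|rfl|rfl <;> intro k <;>
          simp only [map_add, map_sub, map_smul, map_mul, map_one, a, b, c, d, ha4, hb4, hc4, hd4] <;>
          fin_cases k <;>
          simp [Matrix.mul_apply, Fin.sum_univ_four, Matrix.one_apply, Matrix.vecHead,
            Matrix.vecTail] <;> (try field_simp) <;> (try ring)
      simp only [LinearMap.comp_apply, AlgHom.toLinearMap_apply, map_mul, entryLM,
        LinearMap.coe_mk, AddHom.coe_mk, Matrix.mul_apply]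
      change (φ' g * φ' f) 0 2 = 0
      rw [Matrix.mul_apply]
      exact Finset.sum_eq_zero fun k _ => by rw [hg0 k, zero_mul]
    · change ¬ (φ' b) 0 2 = 0
      simp [entryLM, b, hb4]
  refine ⟨hbI, hbI', ?_⟩
  intro hII
  apply hbI
  have mem1 : (a - (q:ℂ) • (1 : SUq q 2)) * b ∈ I :=
    Submodule.subset_span ⟨_, by simp, 1, (mul_one _).symm⟩
  have mem2 : (a - 1) * b ∈ I' :=
    Submodule.subset_span ⟨_, by simp, 1, (mul_one _).symm⟩
  have mem2' : (a - 1) * b ∈ I := hII ▸ mem2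
  have key : ((1:ℂ) - (q:ℂ)) • b = (a - (q:ℂ) • (1 : SUq q 2)) * b - (a - 1) * b := by
    simp only [sub_mul, smul_mul_assoc, one_mul]
    module
  have hmem := I.sub_mem mem1 mem2'
  rw [← key] at hmem
  have := I.smul_mem ((1 - (q:ℂ))⁻¹) hmem
  rwa [smul_smul, inv_mul_cancel₀ hq1c, one_smul] at this
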